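/- For every continuous function φ : S¹ → ℂ, the commutators of u_t with the multiplication operator M_φ on L²(S¹) satisfy ‖u_t M_φ − M_φ u_t‖ → 0 as t → ∞. -/

import Mathlib

open Complex Real Filter MeasureTheory AddCircle

instance : Fact ((0 : ℝ) < 1) := ⟨one_pos⟩

/-- `L²(S¹)`, realized as the `L²` space of the circle `ℝ/ℤ` with its normalized Haar
measure; the Fourier orthonormal basis is `(fourierLp 2 n)_{n ∈ ℤ}`. -/
noncomputable abbrev L2Circle : Type := Lp ℂ 2 (@haarAddCircle 1 _)

open scoped ENNReal NNReal

set_option maxHeartbeats 1000000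

namespace CommAux

noncomputable def B : HilbertBasis ℤ ℂ L2Circle := @fourierBasis 1 _

lemma B_eq (n : ℤ) : (B n : L2Circle) = fourierLp 2 n := congrFun coe_fourierBasis n

lemma norm_le_of_shift (T : L2Circle →L[ℂ] L2Circle) (k : ℤ) (c : ℤ → ℂ) (C : ℝ) (hC : 0 ≤ C)
    (hc : ∀ n, ‖c n‖ ≤ C)
    (hT : ∀ n : ℤ, T (fourierLp 2 n) = c n • (fourierLp 2 (n + k) : L2Circle)) :
    ‖T‖ ≤ C := by
  refine T.opNorm_le_bound hC fun ξ => ?_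
  have key : ∀ m : ℤ, B.repr (T ξ) m = c (m - k) * B.repr ξ (m - k) := by
    intro m
    have hfun : (fun n : ℤ => T (B.repr ξ n • (B n : L2Circle)))
        = fun n : ℤ => (B.repr ξ n * c n) • (fourierLp 2 (n + k) : L2Circle) := by
      funext n
      show T (B.repr ξ n • (B n : L2Circle)) = _
      rw [_root_.map_smul, B_eq, hT, smul_smul]
    have h2 : HasSum (fun n : ℤ => (B.repr ξ n * c n) • (fourierLp 2 (n + k) : L2Circle))
        (T ξ) := by
      rw [← hfun]; exact (B.hasSum_repr ξ).mapL T
    have h3 := h2.mapL (innerSL ℂ (B m : L2Circle))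
    have h4 : (fun n : ℤ => (innerSL ℂ (B m : L2Circle))
          ((B.repr ξ n * c n) • (fourierLp 2 (n + k) : L2Circle)))
        = fun n : ℤ => if n = m - k then B.repr ξ (m - k) * c (m - k) else 0 := by
      funext n
      have hiter : (inner ℂ (B m : L2Circle) (B (n+k) : L2Circle) : ℂ)
          = if m = n + k then 1 else 0 := orthonormal_iff_ite.mp B.orthonormal m (n + k)
      show (inner ℂ (B m : L2Circle) ((B.repr ξ n * c n) • (fourierLp 2 (n+k) : L2Circle)) : ℂ) = _
      rw [inner_smul_right, ← B_eq (n+k), hiter]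
      by_cases hn : n = m - k
      · have hm : m = n + k := by omega
        rw [if_pos hm, mul_one, if_pos hn, hn]
      · have hm : ¬ (m = n + k) := by omega
        rw [if_neg hm, mul_zero, if_neg hn]
    rw [h4] at h3
    have h5 : HasSum (fun n : ℤ => if n = m - k then B.repr ξ (m - k) * c (m - k) else 0)
        (B.repr ξ (m - k) * c (m - k)) := hasSum_ite_eq _ _
    have h6 := h3.unique h5
    rw [B.repr_apply_apply]
    rw [show (inner ℂ (B m : L2Circle) (T ξ) : ℂ) = innerSL ℂ (B m : L2Circle) (T ξ) from rfl, h6]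
    ring
  have hp : (0:ℝ) < (2 : ℝ≥0∞).toReal := by norm_num
  have hpow : ∀ x : ℝ, x ^ ((2:ℝ≥0∞)).toReal = x ^ 2 := fun x => by
    rw [show ((2:ℝ≥0∞)).toReal = ((2:ℕ):ℝ) by simp, Real.rpow_natCast]
  have hTsum : HasSum (fun m : ℤ => ‖B.repr (T ξ) m‖ ^ 2) (‖T ξ‖ ^ 2) := by
    have := lp.hasSum_norm hp (B.repr (T ξ))
    simpa only [hpow, B.repr.norm_map] using this
  have hXsum : HasSum (fun n : ℤ => ‖B.repr ξ n‖ ^ 2) (‖ξ‖ ^ 2) := by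
    have := lp.hasSum_norm hp (B.repr ξ)
    simpa only [hpow, B.repr.norm_map] using this
  have hXsum' : HasSum (fun m : ℤ => ‖B.repr ξ (m - k)‖ ^ 2) (‖ξ‖ ^ 2) :=
    (Equiv.subRight k).hasSum_iff.mpr hXsum
  have hle : ‖T ξ‖ ^ 2 ≤ C ^ 2 * ‖ξ‖ ^ 2 := by
    refine hasSum_le (fun m => ?_) hTsum (hXsum'.mul_left (C ^ 2))
    rw [key m, norm_mul, mul_pow]
    have h1 : ‖c (m - k)‖ ^ 2 ≤ C ^ 2 :=
      pow_le_pow_left₀ (norm_nonneg _) (hc (m - k)) 2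
    exact mul_le_mul_of_nonneg_right h1 (by positivity)
  calc ‖T ξ‖ = Real.sqrt (‖T ξ‖ ^ 2) := (Real.sqrt_sq (norm_nonneg _)).symm
    _ ≤ Real.sqrt (C ^ 2 * ‖ξ‖ ^ 2) := Real.sqrt_le_sqrt hle
    _ = C * ‖ξ‖ := by rw [← mul_pow, Real.sqrt_sq (by positivity)]


lemma exp_I_lip (a b : ℝ) : ‖Complex.exp (a * I) - Complex.exp (b * I)‖ ≤ |a - b| := by
  have hder : ∀ x : ℝ, x ∈ (Set.univ : Set ℝ) →
      HasDerivWithinAt (fun y : ℝ => Complex.exp (y * I))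
        (Complex.exp ((x:ℂ) * I) * I) Set.univ x := by
    intro x _
    have h1 : HasDerivAt (fun y : ℝ => (y : ℂ) * I) I x := by
      simpa using (Complex.ofRealCLM.hasDerivAt (x := x)).mul_const I
    exact h1.cexp.hasDerivWithinAt
  have hb : ∀ x : ℝ, x ∈ (Set.univ : Set ℝ) → ‖Complex.exp ((x:ℂ) * I) * I‖ ≤ 1 := by
    intro x _
    rw [norm_mul, Complex.norm_exp_ofReal_mul_I,
      Complex.norm_I, mul_one]
  have := Convex.norm_image_sub_le_of_norm_hasDerivWithin_le hder hb convex_univ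
    (Set.mem_univ b) (Set.mem_univ a)
  simpa [Real.norm_eq_abs] using this

noncomputable def lam (t : ℝ) (n : ℤ) : ℂ :=
  if 0 ≤ n ∧ (n : ℝ) ≤ t then Complex.exp (2 * Real.pi * Complex.I * n / t) else 1

noncomputable def th (t : ℝ) (n : ℤ) : ℝ := 2 * Real.pi * min (max (n : ℝ) 0) t / t

lemma lam_eq (t : ℝ) (ht : 1 ≤ t) (n : ℤ) : lam t n = Complex.exp ((th t n : ℝ) * I) := by
  have ht0 : (0:ℝ) < t := lt_of_lt_of_le one_pos ht
  unfold lam th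
  by_cases h : 0 ≤ n ∧ (n : ℝ) ≤ t
  · rw [if_pos h]
    have h0 : (0:ℝ) ≤ (n:ℝ) := by exact_mod_cast h.1
    rw [max_eq_left h0, min_eq_left h.2]
    congr 1
    push_cast
    field_simp
  · rw [if_neg h]
    rcases not_and_or.mp h with h1 | h2
    · have hn : (n:ℝ) ≤ 0 := by exact_mod_cast (not_le.mp h1).le
      rw [max_eq_right hn, min_eq_left ht0.le]
      simp
    · have hn : t ≤ (n:ℝ) := (not_le.mp h2).le
      rw [min_eq_right (le_max_of_le_left hn), mul_div_assoc, div_self ht0.ne', mul_one]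
      rw [show (((2 * Real.pi : ℝ)) : ℂ) * I = 2 * (Real.pi : ℂ) * I by push_cast; ring]
      exact Complex.exp_two_pi_mul_I.symm

lemma norm_lam (t : ℝ) (ht : 1 ≤ t) (n : ℤ) : ‖lam t n‖ = 1 := by
  rw [lam_eq t ht n, Complex.norm_exp_ofReal_mul_I]

lemma lam_sub (t : ℝ) (ht : 1 ≤ t) (k n : ℤ) :
    ‖lam t (n + k) - lam t n‖ ≤ 2 * Real.pi * |(k:ℝ)| / t := by
  have ht0 : (0:ℝ) < t := lt_of_lt_of_le one_pos ht
  rw [lam_eq t ht, lam_eq t ht]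
  refine (exp_I_lip _ _).trans ?_
  unfold th
  set a : ℝ := min (max ((n + k : ℤ) : ℝ) 0) t with ha
  set b : ℝ := min (max ((n : ℤ) : ℝ) 0) t with hb
  have h1 : |a - b| ≤ |(k:ℝ)| := by
    have h2 : |a - b| ≤ max |max ((n+k:ℤ):ℝ) 0 - max ((n:ℤ):ℝ) 0| |t - t| :=
      abs_min_sub_min_le_max _ _ _ _
    have h3 : |max ((n+k:ℤ):ℝ) 0 - max ((n:ℤ):ℝ) 0| ≤ |((n+k:ℤ):ℝ) - ((n:ℤ):ℝ)| :=
      abs_max_sub_max_le_abs _ _ _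
    have h4 : |((n+k:ℤ):ℝ) - ((n:ℤ):ℝ)| = |(k:ℝ)| := by
      push_cast; ring_nf
    rw [sub_self, abs_zero, max_eq_left (abs_nonneg _)] at h2
    calc |a - b| ≤ _ := h2
      _ ≤ _ := h3
      _ = |(k:ℝ)| := h4
  have h5 : |2 * Real.pi * a / t - 2 * Real.pi * b / t| = 2 * Real.pi / t * |a - b| := by
    rw [show 2 * Real.pi * a / t - 2 * Real.pi * b / t = 2 * Real.pi / t * (a - b) by ring,
      abs_mul, abs_of_pos (by positivity)]
  rw [h5]
  calc 2 * Real.pi / t * |a - b| ≤ 2 * Real.pi / t * |(k:ℝ)| :=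
        mul_le_mul_of_nonneg_left h1 (by positivity)
    _ = 2 * Real.pi * |(k:ℝ)| / t := by ring


lemma eLpNorm_mul_le {ψ : AddCircle (1:ℝ) → ℂ} {C : ℝ} (hC : 0 ≤ C) (hb : ∀ x, ‖ψ x‖ ≤ C)
    (ξ : L2Circle) :
    eLpNorm (fun x => ψ x * ξ x) 2 (@haarAddCircle 1 _)
      ≤ ENNReal.ofReal C * eLpNorm (⇑ξ) 2 (@haarAddCircle 1 _) := by
  calc eLpNorm (fun x => ψ x * ξ x) 2 (@haarAddCircle 1 _)
      ≤ eLpNorm (fun x => ((C:ℝ):ℂ) * ξ x) 2 (@haarAddCircle 1 _) := by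
        refine eLpNorm_mono_ae (Eventually.of_forall fun x => ?_)
        rw [norm_mul, norm_mul, Complex.norm_real, Real.norm_eq_abs, _root_.abs_of_nonneg hC]
        exact mul_le_mul_of_nonneg_right (hb x) (norm_nonneg _)
    _ = ENNReal.ofReal C * eLpNorm (⇑ξ) 2 (@haarAddCircle 1 _) := by
        have hn : ‖((C:ℝ):ℂ)‖₊ = C.toNNReal := by
          refine NNReal.coe_injective ?_
          simp [Real.coe_toNNReal', Complex.norm_real, _root_.abs_of_nonneg hC,
            max_eq_left hC]
        rw [show (fun x => ((C:ℝ):ℂ) * ξ x) = ((C:ℝ):ℂ) • (⇑ξ) from rfl,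
          eLpNorm_const_smul, enorm_eq_nnnorm, hn, ENNReal.ofReal]


lemma norm_le_of_ae_mul {ψ : AddCircle (1:ℝ) → ℂ} {C : ℝ} (hC : 0 ≤ C) (hb : ∀ x, ‖ψ x‖ ≤ C)
    (N : L2Circle →L[ℂ] L2Circle)
    (hN : ∀ ξ : L2Circle, (⇑(N ξ)) =ᵐ[@haarAddCircle 1 _] fun x => ψ x * ξ x) :
    ‖N‖ ≤ C := by
  refine N.opNorm_le_bound hC fun ξ => ?_
  rw [Lp.norm_def, eLpNorm_congr_ae (hN ξ)]
  have h := eLpNorm_mul_le hC hb ξ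
  calc (eLpNorm (fun x => ψ x * ξ x) 2 (@haarAddCircle 1 _)).toReal
      ≤ (ENNReal.ofReal C * eLpNorm (⇑ξ) 2 (@haarAddCircle 1 _)).toReal := by
        refine ENNReal.toReal_mono ?_ h
        exact ENNReal.mul_ne_top ENNReal.ofReal_ne_top (Lp.eLpNorm_ne_top ξ)
    _ = C * ‖ξ‖ := by
        rw [ENNReal.toReal_mul, ENNReal.toReal_ofReal hC, ← Lp.norm_def]

lemma memLp_mul (ψ : C(AddCircle (1:ℝ), ℂ)) (ξ : L2Circle) :
    MemLp (fun x => ψ x * ξ x) 2 (@haarAddCircle 1 _) := by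
  have hpsi : MemLp (⇑ψ) ∞ (@haarAddCircle 1 _) :=
    memLp_top_of_bound ψ.continuous.aestronglyMeasurable ‖ψ‖
      (Eventually.of_forall fun x => ψ.norm_coe_le_norm x)
  have h := (Lp.memLp ξ).smul (r := 2) hpsi
  have he : (⇑ψ • ⇑ξ : AddCircle (1:ℝ) → ℂ) = fun x => ψ x * ξ x := by
    funext x; simp [Pi.smul_apply', smul_eq_mul]
  rwa [he] at h

noncomputable def mulCLM (ψ : C(AddCircle (1:ℝ), ℂ)) : L2Circle →L[ℂ] L2Circle :=
  LinearMap.mkContinuous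
    { toFun := fun ξ => (memLp_mul ψ ξ).toLp (fun x => ψ x * ξ x)
      map_add' := by
        intro ξ η
        apply Lp.ext
        filter_upwards [(memLp_mul ψ (ξ + η)).coeFn_toLp, Lp.coeFn_add ξ η,
          Lp.coeFn_add ((memLp_mul ψ ξ).toLp _) ((memLp_mul ψ η).toLp _),
          (memLp_mul ψ ξ).coeFn_toLp, (memLp_mul ψ η).coeFn_toLp] with x h1 h2 h3 h4 h5
        rw [h1, h3, Pi.add_apply, h4, h5, h2, Pi.add_apply, mul_add]
      map_smul' := by
        intro a ξ
        apply Lp.ext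
        filter_upwards [(memLp_mul ψ (a • ξ)).coeFn_toLp, Lp.coeFn_smul a ξ,
          Lp.coeFn_smul a ((memLp_mul ψ ξ).toLp _),
          (memLp_mul ψ ξ).coeFn_toLp] with x h1 h2 h3 h4
        rw [h1, RingHom.id_apply, h3, Pi.smul_apply, h4, h2, Pi.smul_apply]
        simp [smul_eq_mul]; ring }
    ‖ψ‖
    (by
      intro ξ
      simp only [LinearMap.coe_mk, AddHom.coe_mk]
      rw [Lp.norm_toLp]
      have h := eLpNorm_mul_le (norm_nonneg ψ) (fun x => ψ.norm_coe_le_norm x) ξ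
      calc (eLpNorm (fun x => ψ x * ξ x) 2 (@haarAddCircle 1 _)).toReal
          ≤ (ENNReal.ofReal ‖ψ‖ * eLpNorm (⇑ξ) 2 (@haarAddCircle 1 _)).toReal := by
            refine ENNReal.toReal_mono ?_ h
            exact ENNReal.mul_ne_top ENNReal.ofReal_ne_top (Lp.eLpNorm_ne_top ξ)
        _ = ‖ψ‖ * ‖ξ‖ := by
            rw [ENNReal.toReal_mul, ENNReal.toReal_ofReal (norm_nonneg ψ), ← Lp.norm_def])

lemma mulCLM_coeFn (ψ : C(AddCircle (1:ℝ), ℂ)) (ξ : L2Circle) :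
    (⇑(mulCLM ψ ξ)) =ᵐ[@haarAddCircle 1 _] fun x => ψ x * ξ x :=
  (memLp_mul ψ ξ).coeFn_toLp

lemma mulCLM_fourier (k n : ℤ) :
    mulCLM (fourier k) (fourierLp 2 n) = (fourierLp 2 (n + k) : L2Circle) := by
  apply Lp.ext
  filter_upwards [mulCLM_coeFn (fourier k) (fourierLp 2 n), coeFn_fourierLp 2 n,
    coeFn_fourierLp 2 (n + k)] with x h1 h2 h3
  rw [h1, h3, h2, fourier_add, mul_comm]

end CommAux

set_option maxHeartbeats 2000000 in
/-- For every continuous `φ : S¹ → ℂ`, the commutator of `u_t` (the diagonal unitary with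
`u_t δ_n = e^{2πin/t} δ_n` for `0 ≤ n ≤ t` and `u_t δ_n = δ_n` otherwise) with the
multiplication operator `M_φ` on `L²(S¹)` satisfies `‖u_t M_φ - M_φ u_t‖ → 0` as `t → ∞`. -/
theorem commutator_with_multiplication_tendsto_zero
    (φ : AddCircle (1 : ℝ) → ℂ) (hφ : Continuous φ)
    (M : L2Circle →L[ℂ] L2Circle)
    (hM : ∀ ξ : L2Circle, (⇑(M ξ)) =ᵐ[@haarAddCircle 1 _] fun x => φ x * ξ x)
    (U : ℝ → (L2Circle →L[ℂ] L2Circle))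
    (hU : ∀ t : ℝ, 1 ≤ t → ∀ n : ℤ,
      U t (fourierLp 2 n) =
        (if 0 ≤ n ∧ (n : ℝ) ≤ t then Complex.exp (2 * Real.pi * Complex.I * n / t) else 1) •
          fourierLp 2 n) :
    Tendsto (fun t : ℝ => ‖U t ∘L M - M ∘L U t‖) atTop (nhds 0) := by
  classical
  rw [NormedAddCommGroup.tendsto_nhds_zero]
  intro ε hε
  set φc : C(AddCircle (1:ℝ), ℂ) := ⟨φ, hφ⟩ with hφc
  have hmem : φc ∈ closure ((Submodule.span ℂ (Set.range (@fourier 1)) :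
      Submodule ℂ C(AddCircle (1:ℝ), ℂ)) : Set C(AddCircle (1:ℝ), ℂ)) := by
    have h := span_fourier_closure_eq_top (T := 1)
    have h2 : φc ∈ (Submodule.span ℂ (Set.range (@fourier 1))).topologicalClosure := by
      rw [h]; trivial
    exact h2
  obtain ⟨f, hf_mem, hf_dist⟩ := Metric.mem_closure_iff.mp hmem (ε/4) (by positivity)
  obtain ⟨d, hd⟩ := Finsupp.mem_span_range_iff_exists_finsupp.mp hf_mem
  set g : C(AddCircle (1:ℝ), ℂ) := ∑ k ∈ d.support, d k • fourier k with hg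
  have hgf : g = f := by rw [hg, ← hd]; rfl
  set MP : L2Circle →L[ℂ] L2Circle := ∑ k ∈ d.support, d k • CommAux.mulCLM (fourier k)
    with hMP
  have hsum_ae : ∀ (s : Finset ℤ) (ξ : L2Circle),
      (⇑((∑ k ∈ s, d k • CommAux.mulCLM (fourier k)) ξ)) =ᵐ[@haarAddCircle 1 _]
        fun x => (∑ k ∈ s, d k • (fourier k : C(AddCircle (1:ℝ), ℂ))) x * ξ x := by
    intro s ξ
    induction s using Finset.induction_on with
    | empty =>
        simp only [Finset.sum_empty, ContinuousLinearMap.zero_apply]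
        filter_upwards [Lp.coeFn_zero ℂ 2 (@haarAddCircle 1 _)] with x hx
        simp [hx]
    | @insert a s' ha ih =>
        rw [Finset.sum_insert ha, Finset.sum_insert ha, ContinuousLinearMap.add_apply,
          ContinuousLinearMap.smul_apply]
        filter_upwards [Lp.coeFn_add (d a • CommAux.mulCLM (fourier a) ξ)
            ((∑ k ∈ s', d k • CommAux.mulCLM (fourier k)) ξ),
          Lp.coeFn_smul (d a) (CommAux.mulCLM (fourier a) ξ),
          CommAux.mulCLM_coeFn (fourier a) ξ, ih] with x h1 h2 h3 h4
        rw [h1, Pi.add_apply, h2, Pi.smul_apply, h3, h4]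
        simp only [ContinuousMap.add_apply, ContinuousMap.coe_smul, Pi.smul_apply,
          smul_eq_mul]
        ring
  have hN : ∀ ξ : L2Circle, (⇑((M - MP) ξ)) =ᵐ[@haarAddCircle 1 _]
      fun x => (φ x - f x) * ξ x := by
    intro ξ
    rw [ContinuousLinearMap.sub_apply]
    filter_upwards [hM ξ, hsum_ae d.support ξ, Lp.coeFn_sub (M ξ) (MP ξ)] with x h1 h2 h3
    rw [h3, Pi.sub_apply, h1, hMP, h2, ← hgf]
    have : g x = (∑ k ∈ d.support, d k • (fourier k : C(AddCircle (1:ℝ), ℂ))) x := by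
      rw [hg]
    rw [this]
    ring
  have hNnorm : ‖M - MP‖ ≤ ‖φc - f‖ := by
    refine CommAux.norm_le_of_ae_mul (norm_nonneg _) (fun x => ?_) (M - MP) hN
    have := (φc - f).norm_coe_le_norm x
    simpa [ContinuousMap.sub_apply, hφc] using this
  set K := ∑ k ∈ d.support, ‖d k‖ * (2 * Real.pi * |(k:ℝ)|) with hK
  have hK0 : 0 ≤ K := Finset.sum_nonneg fun k _ => by positivity
  have htend : Tendsto (fun t : ℝ => K / t) atTop (nhds 0) := by
    simpa [div_eq_mul_inv] using tendsto_inv_atTop_zero.const_mul K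
  have h2 : ∀ᶠ t : ℝ in atTop, K / t < ε/4 := htend.eventually_lt_const (by positivity)
  filter_upwards [eventually_ge_atTop (1:ℝ), h2] with t ht hKt
  have ht0 : (0:ℝ) < t := lt_of_lt_of_le one_pos ht
  have hU1 : ‖U t‖ ≤ 1 := by
    refine CommAux.norm_le_of_shift (U t) 0 (CommAux.lam t) 1 zero_le_one
      (fun n => (CommAux.norm_lam t ht n).le) (fun n => ?_)
    rw [add_zero]
    exact hU t ht n
  have hCk : ∀ k : ℤ, ‖U t ∘L CommAux.mulCLM (fourier k)
      - CommAux.mulCLM (fourier k) ∘L U t‖ ≤ 2 * Real.pi * |(k:ℝ)| / t := by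
    intro k
    refine CommAux.norm_le_of_shift _ k (fun n => CommAux.lam t (n + k) - CommAux.lam t n) _
      (by positivity) (fun n => CommAux.lam_sub t ht k n) (fun n => ?_)
    rw [ContinuousLinearMap.sub_apply, ContinuousLinearMap.comp_apply,
      ContinuousLinearMap.comp_apply, CommAux.mulCLM_fourier k n, hU t ht (n + k),
      hU t ht n, _root_.map_smul, CommAux.mulCLM_fourier k n, sub_smul]
    rfl
  have heq : U t ∘L MP - MP ∘L U t = ∑ k ∈ d.support,
      d k • (U t ∘L CommAux.mulCLM (fourier k) - CommAux.mulCLM (fourier k) ∘L U t) := by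
    ext ξ
    simp [hMP, ContinuousLinearMap.sum_apply, ContinuousLinearMap.smul_apply,
      ContinuousLinearMap.sub_apply, ContinuousLinearMap.comp_apply, map_sum, _root_.map_smul,
      Finset.sum_sub_distrib, smul_sub]
  have hterm2 : ‖U t ∘L MP - MP ∘L U t‖ ≤ K / t := by
    rw [heq]
    refine (norm_sum_le _ _).trans ?_
    rw [hK, Finset.sum_div]
    refine Finset.sum_le_sum fun k hk => ?_
    calc ‖d k • (U t ∘L CommAux.mulCLM (fourier k) - CommAux.mulCLM (fourier k) ∘L U t)‖
        ≤ ‖d k‖ * ‖U t ∘L CommAux.mulCLM (fourier k) - CommAux.mulCLM (fourier k) ∘L U t‖ :=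
          ContinuousLinearMap.opNorm_smul_le _ _
      _ ≤ ‖d k‖ * (2 * Real.pi * |(k:ℝ)| / t) :=
          mul_le_mul_of_nonneg_left (hCk k) (norm_nonneg _)
      _ = ‖d k‖ * (2 * Real.pi * |(k:ℝ)|) / t := by ring
  have hdecomp : U t ∘L M - M ∘L U t =
      (U t ∘L (M - MP) - (M - MP) ∘L U t) + (U t ∘L MP - MP ∘L U t) := by
    rw [ContinuousLinearMap.comp_sub, ContinuousLinearMap.sub_comp]
    abel
  rw [Real.norm_eq_abs, _root_.abs_of_nonneg (norm_nonneg _), hdecomp]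
  have a1 : ‖U t ∘L (M - MP)‖ ≤ ‖φc - f‖ := by
    refine (ContinuousLinearMap.opNorm_comp_le _ _).trans ?_
    calc ‖U t‖ * ‖M - MP‖ ≤ 1 * ‖φc - f‖ :=
          mul_le_mul hU1 hNnorm (norm_nonneg _) zero_le_one
      _ = ‖φc - f‖ := one_mul _
  have a2 : ‖(M - MP) ∘L U t‖ ≤ ‖φc - f‖ := by
    refine (ContinuousLinearMap.opNorm_comp_le _ _).trans ?_
    calc ‖M - MP‖ * ‖U t‖ ≤ ‖φc - f‖ * 1 :=
          mul_le_mul hNnorm hU1 (norm_nonneg _) (norm_nonneg _)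
      _ = ‖φc - f‖ := mul_one _
  have hdist : ‖φc - f‖ < ε/4 := by rwa [← dist_eq_norm]
  calc ‖(U t ∘L (M - MP) - (M - MP) ∘L U t) + (U t ∘L MP - MP ∘L U t)‖
      ≤ ‖U t ∘L (M - MP) - (M - MP) ∘L U t‖ + ‖U t ∘L MP - MP ∘L U t‖ := norm_add_le _ _
    _ ≤ (‖U t ∘L (M - MP)‖ + ‖(M - MP) ∘L U t‖) + (K / t) :=
          add_le_add (norm_sub_le _ _) hterm2
    _ < (ε/4 + ε/4) + ε/4 := by
          have := a1.trans_lt hdist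
          have := a2.trans_lt hdist
          linarith
    _ ≤ ε := by linarith
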